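/- Soundness of SkMBiCA with respect to relational models: if A ⊢ B is provable in SkMBiCA, then v(A) ⊆ v(B) in every SkMBiCA model ⟨W, ≤, I, L, R, v⟩. -/
import Mathlib


/-- Formulae of skew monoidal bi-closed logic:
atoms, unit I, left/right tensors and implications. -/
inductive Fma2 : Type
  | atom : ℕ → Fma2
  | I : Fma2
  | tL : Fma2 → Fma2 → Fma2   -- A ⊗ᴸ B
  | lL : Fma2 → Fma2 → Fma2   -- A ⊸ᴸ B
  | tR : Fma2 → Fma2 → Fma2   -- A ⊗ᴿ B
  | lR : Fma2 → Fma2 → Fma2   -- A ⊸ᴿ B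

/-- Derivability in the axiomatic calculus SkMBiCA: `ADer A B` means `A ⊢ B`. -/
inductive ADer : Fma2 → Fma2 → Prop
  | id {A} : ADer A A
  | comp {A B C} : ADer A B → ADer B C → ADer A C
  | tensL {A B C D} : ADer A C → ADer B D → ADer (Fma2.tL A B) (Fma2.tL C D)
  | lolliL {A B C D} : ADer C A → ADer B D → ADer (Fma2.lL A B) (Fma2.lL C D)
  | lolliR {A B C D} : ADer C A → ADer B D → ADer (Fma2.lR A B) (Fma2.lR C D)
  | lam {A} : ADer (Fma2.tL Fma2.I A) A
  | rho {A} : ADer A (Fma2.tL A Fma2.I)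
  | alpha {A B C} : ADer (Fma2.tL (Fma2.tL A B) C) (Fma2.tL A (Fma2.tL B C))
  | gamma {A B} : ADer (Fma2.tL A B) (Fma2.tR B A)
  | gammaInv {A B} : ADer (Fma2.tR A B) (Fma2.tL B A)
  | pi {A B C} : ADer (Fma2.tL A B) C → ADer A (Fma2.lL B C)
  | piInv {A B C} : ADer A (Fma2.lL B C) → ADer (Fma2.tL A B) C
  | piR {A B C} : ADer (Fma2.tR A B) C → ADer A (Fma2.lR B C)
  | piRInv {A B C} : ADer A (Fma2.lR B C) → ADer (Fma2.tR A B) C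

section Frames

variable {W : Type}

/-- `IsSkFrame le I L R` : ⟨W, ≤, I, L, R⟩ is a SkMBiCA frame. -/
structure IsSkFrame (le : W → W → Prop) (I : Set W)
    (L R : W → W → W → Prop) : Prop where
  refl : ∀ a, le a a
  trans : ∀ {a b c}, le a b → le b c → le a c
  I_down : ∀ {a b}, le a b → b ∈ I → a ∈ I
  L_up₁ : ∀ {a a' b c}, le a a' → L a b c → L a' b c
  L_up₂ : ∀ {a b b' c}, le b b' → L a b c → L a b' c
  L_down₃ : ∀ {a b c c'}, le c' c → L a b c → L a b c'
  R_up₁ : ∀ {a a' b c}, le a a' → R a b c → R a' b c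
  R_up₂ : ∀ {a b b' c}, le b b' → R a b c → R a b' c
  R_down₃ : ∀ {a b c c'}, le c' c → R a b c → R a b c'
  LR_reverse : ∀ a b c, L a b c ↔ R b a c
  LSA : ∀ {a b c d x}, L a b x → L x c d → ∃ y, L b c y ∧ L a y d
  LSLU : ∀ {a b e}, e ∈ I → L e a b → le b a
  LSRU : ∀ a, ∃ e ∈ I, L a e a

/-- `IsValuation le I L R v` : `v` is a valuation on the frame ⟨W, ≤, I, L, R⟩. -/
structure IsValuation (le : W → W → Prop) (I : Set W)
    (L R : W → W → W → Prop) (v : Fma2 → Set W) : Prop where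
  down : ∀ (A : Fma2) {a b}, le a b → b ∈ v A → a ∈ v A
  unit : v Fma2.I = I
  tensL : ∀ A B, v (Fma2.tL A B) = {c | ∃ a ∈ v A, ∃ b ∈ v B, L a b c}
  lolliL : ∀ A B, v (Fma2.lL A B) = {c | ∀ a ∈ v A, ∀ b, L c a b → b ∈ v B}
  tensR : ∀ A B, v (Fma2.tR A B) = {c | ∃ a ∈ v A, ∃ b ∈ v B, R a b c}
  lolliR : ∀ A B, v (Fma2.lR A B) = {c | ∀ a ∈ v A, ∀ b, R c a b → b ∈ v B}

end Frames

/-- Soundness of SkMBiCA w.r.t. relational models. -/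
theorem soundness (A B : Fma2) (h : ADer A B) :
    ∀ (W : Type) (le : W → W → Prop) (I : Set W) (L R : W → W → W → Prop)
      (v : Fma2 → Set W), IsSkFrame le I L R → IsValuation le I L R v →
      v A ⊆ v B := by
  induction h with
  | @id A =>
    intro W le I L R v hF hV x hx; exact hx
  | @comp A B C _ _ ih1 ih2 =>
    intro W le I L R v hF hV x hx
    exact ih2 W le I L R v hF hV (ih1 W le I L R v hF hV hx)
  | @tensL A B C D _ _ ih1 ih2 =>
    intro W le I L R v hF hV x hx
    rw [hV.tensL] at hx ⊢
    obtain ⟨a, ha, b, hb, hL⟩ := hx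
    exact ⟨a, ih1 W le I L R v hF hV ha, b, ih2 W le I L R v hF hV hb, hL⟩
  | @lolliL A B C D _ _ ih1 ih2 =>
    intro W le I L R v hF hV x hx
    rw [hV.lolliL] at hx ⊢
    intro a ha b hL
    exact ih2 W le I L R v hF hV (hx a (ih1 W le I L R v hF hV ha) b hL)
  | @lolliR A B C D _ _ ih1 ih2 =>
    intro W le I L R v hF hV x hx
    rw [hV.lolliR] at hx ⊢
    intro a ha b hR
    exact ih2 W le I L R v hF hV (hx a (ih1 W le I L R v hF hV ha) b hR)
  | @lam A =>
    intro W le I L R v hF hV x hx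
    rw [hV.tensL] at hx
    obtain ⟨e, he, a, ha, hL⟩ := hx
    rw [hV.unit] at he
    exact hV.down A (hF.LSLU he hL) ha
  | @rho A =>
    intro W le I L R v hF hV x hx
    rw [hV.tensL]
    obtain ⟨e, he, hL⟩ := hF.LSRU x
    exact ⟨x, hx, e, by rw [hV.unit]; exact he, hL⟩
  | @alpha A B C =>
    intro W le I L R v hF hV x hx
    rw [hV.tensL] at hx ⊢
    obtain ⟨ab, hab, c, hc, hL1⟩ := hx
    rw [hV.tensL] at hab
    obtain ⟨a, ha, b, hb, hL2⟩ := hab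
    obtain ⟨y, hy1, hy2⟩ := hF.LSA hL2 hL1
    exact ⟨a, ha, y, by rw [hV.tensL]; exact ⟨b, hb, c, hc, hy1⟩, hy2⟩
  | @gamma A B =>
    intro W le I L R v hF hV x hx
    rw [hV.tensL] at hx; rw [hV.tensR]
    obtain ⟨a, ha, b, hb, hL⟩ := hx
    exact ⟨b, hb, a, ha, (hF.LR_reverse a b x).mp hL⟩
  | @gammaInv A B =>
    intro W le I L R v hF hV x hx
    rw [hV.tensR] at hx; rw [hV.tensL]
    obtain ⟨a, ha, b, hb, hR⟩ := hx
    exact ⟨b, hb, a, ha, (hF.LR_reverse b a x).mpr hR⟩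
  | @pi A B C _ ih =>
    intro W le I L R v hF hV x hx
    rw [hV.lolliL]
    intro a ha b hL
    exact ih W le I L R v hF hV (by rw [hV.tensL]; exact ⟨x, hx, a, ha, hL⟩)
  | @piInv A B C _ ih =>
    intro W le I L R v hF hV x hx
    rw [hV.tensL] at hx
    obtain ⟨a, ha, b, hb, hL⟩ := hx
    have := ih W le I L R v hF hV ha
    rw [hV.lolliL] at this
    exact this b hb x hL
  | @piR A B C _ ih =>
    intro W le I L R v hF hV x hx
    rw [hV.lolliR]
    intro a ha b hR
    exact ih W le I L R v hF hV (by rw [hV.tensR]; exact ⟨x, hx, a, ha, hR⟩)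
  | @piRInv A B C _ ih =>
    intro W le I L R v hF hV x hx
    rw [hV.tensR] at hx
    obtain ⟨a, ha, b, hb, hR⟩ := hx
    have := ih W le I L R v hF hV ha
    rw [hV.lolliR] at this
    exact this b hb x hR
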